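/- Fix a real α > 1 and an integer m ≥ 1. Suppose the instance is pure-laminar, i.e., for any two jobs with r_j ≤ r_{j'} one has d_j ≥ d_{j'}. Then for every feasible preemptive schedule S_pr on m processors there exists a feasible non-preemptive schedule S_npr on m processors with E(S_npr) ≤ (2·(2 − 1/m))^(α−1) · E(S_pr). In particular this yields a (2(2 − 1/m))^(α−1)-approximation for the problem S|pure-laminar|E. -/

import Mathlib

open MeasureTheory Set

/-- A feasible preemptive (migratory) schedule on `m` identical speed-scalable
processors, for an instance given by jobs `ι` with works `w`, release dates `r` and
deadlines `d`: each job `j` gets a constant speed `speed j > 0` and, on each processor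
`i`, a measurable set `A i j ⊆ [r j, d j]` of execution times; distinct jobs are
disjoint on each processor, a job never runs on two processors simultaneously, and the
total execution time times the speed equals the work. -/
structure PreemptiveSchedule (ι : Type) [Fintype ι] (m : ℕ) (w r d : ι → ℝ) where
  speed : ι → ℝ
  A : Fin m → ι → Set ℝ
  speed_pos : ∀ j, 0 < speed j
  measurableSet_A : ∀ i j, MeasurableSet (A i j)
  A_subset : ∀ i j, A i j ⊆ Icc (r j) (d j)
  disjoint_jobs : ∀ i, ∀ j j', j ≠ j' → Disjoint (A i j) (A i j')
  disjoint_procs : ∀ j, ∀ i i', i ≠ i' → Disjoint (A i j) (A i' j)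
  work_done : ∀ j, speed j * ∑ i, (volume (A i j)).toReal = w j

/-- The energy consumption of a preemptive schedule: each job `j` of work `w j` run at
constant speed `s_j` consumes energy `w j * s_j ^ (α - 1)`. -/
noncomputable def pEnergy {ι : Type} [Fintype ι] {m : ℕ} {w r d : ι → ℝ}
    (α : ℝ) (S : PreemptiveSchedule ι m w r d) : ℝ :=
  ∑ j, w j * S.speed j ^ (α - 1)

/-- A feasible non-preemptive schedule on `m` identical speed-scalable processors:
each job `j` is assigned a processor `proc j`, a start time `start j ≥ r j` and a
processing time `len j > 0` with `start j + len j ≤ d j`, and the open execution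
intervals of distinct jobs on the same processor are pairwise disjoint. -/
structure NPSchedule (ι : Type) [Fintype ι] (m : ℕ) (w r d : ι → ℝ) where
  proc : ι → Fin m
  start : ι → ℝ
  len : ι → ℝ
  len_pos : ∀ j, 0 < len j
  start_ge : ∀ j, r j ≤ start j
  end_le : ∀ j, start j + len j ≤ d j
  disjoint_jobs : ∀ j j', j ≠ j' → proc j = proc j' →
    Disjoint (Set.Ioo (start j) (start j + len j)) (Set.Ioo (start j') (start j' + len j'))

/-- The energy consumption of a non-preemptive schedule: job `j` runs at constant speed
`w j / len j` and consumes energy `w j * (w j / len j) ^ (α - 1)`. -/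
noncomputable def npEnergy {ι : Type} [Fintype ι] {m : ℕ} {w r d : ι → ℝ}
    (α : ℝ) (S : NPSchedule ι m w r d) : ℝ :=
  ∑ j, w j * (w j / S.len j) ^ (α - 1)


section Helpers

lemma graham_pack {ι : Type} [DecidableEq ι] {m : ℕ} (hm : 1 ≤ m) (ℓ W : ι → ℝ)
    (hℓ : ∀ j, 0 ≤ ℓ j) :
    ∀ (L : List ι), L.Nodup →
    ∀ (loads : Fin m → ℝ), (∀ i, 0 ≤ loads i) →
    (∀ k (hk : k < L.length),
      ((∑ i, loads i) + ((L.take k).map ℓ).sum) / m + ℓ (L.get ⟨k, hk⟩) ≤ W (L.get ⟨k, hk⟩)) →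
    ∃ (proc : ι → Fin m) (off : ι → ℝ),
      (∀ j ∈ L, loads (proc j) ≤ off j) ∧
      (∀ j ∈ L, 0 ≤ off j) ∧
      (∀ j ∈ L, off j + ℓ j ≤ W j) ∧
      (∀ j ∈ L, ∀ j' ∈ L, j ≠ j' → proc j = proc j' →
        off j + ℓ j ≤ off j' ∨ off j' + ℓ j' ≤ off j) := by
  intro L
  induction L with
  | nil =>
    intro _ loads _ _
    exact ⟨fun _ => ⟨0, hm⟩, fun _ => 0, by simp, by simp, by simp, by simp⟩
  | cons j L ih =>
    intro hnd loads hload H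
    have hmpos : (0:ℝ) < m := by positivity
    obtain ⟨i0, -, hi0⟩ := Finset.exists_min_image (Finset.univ : Finset (Fin m)) loads
      (by haveI : NeZero m := ⟨by omega⟩; exact Finset.univ_nonempty)
    -- min ≤ average
    have hmin : (m:ℝ) * loads i0 ≤ ∑ i, loads i := by
      have := Finset.card_nsmul_le_sum (Finset.univ : Finset (Fin m)) loads (loads i0)
        (fun x _ => hi0 x (Finset.mem_univ x))
      simpa [nsmul_eq_mul] using this
    set loads' : Fin m → ℝ := Function.update loads i0 (loads i0 + ℓ j) with hloads'
    have hsum' : ∑ i, loads' i = (∑ i, loads i) + ℓ j := by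
      rw [hloads', Finset.sum_update_of_mem (Finset.mem_univ i0)]
      have : ∑ i ∈ Finset.univ \ {i0}, loads i = (∑ i, loads i) - loads i0 := by
        rw [Finset.sum_sdiff_eq_sub (by simp)]; simp
      rw [this]; ring
    have hload' : ∀ i, 0 ≤ loads' i := by
      intro i; rw [hloads']
      rcases eq_or_ne i i0 with h | h
      · rw [h, Function.update_self]
        have := hload i0; have := hℓ j; linarith
      · simpa [Function.update_of_ne h] using hload i
    have hle' : ∀ i, loads i ≤ loads' i := by
      intro i; rw [hloads']
      rcases eq_or_ne i i0 with h | h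
      · rw [h, Function.update_self]; linarith [hℓ j]
      · simp [Function.update_of_ne h]
    have H' : ∀ k (hk : k < L.length),
        ((∑ i, loads' i) + ((L.take k).map ℓ).sum) / m + ℓ (L.get ⟨k, hk⟩)
          ≤ W (L.get ⟨k, hk⟩) := by
      intro k hk
      have hk' : k + 1 < (j :: L).length := by simpa using Nat.succ_lt_succ hk
      have := H (k+1) hk'
      simpa [hsum', List.take_succ_cons, add_assoc, add_comm, add_left_comm] using this
    obtain ⟨proc, off, h1, h2, h3, h4⟩ := ih hnd.of_cons loads' hload' H'
    have hjL : j ∉ L := by simpa using (List.nodup_cons.mp hnd).1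
    refine ⟨Function.update proc j i0, Function.update off j (loads i0), ?_, ?_, ?_, ?_⟩
    · intro a ha
      rcases List.mem_cons.mp ha with h | h
      · subst h; simp
      · have haj : a ≠ j := fun e => hjL (e ▸ h)
        rw [Function.update_of_ne haj, Function.update_of_ne haj]
        exact le_trans (hle' _) (h1 a h)
    · intro a ha
      rcases List.mem_cons.mp ha with h | h
      · subst h; simpa using hload i0
      · have haj : a ≠ j := fun e => hjL (e ▸ h)
        rw [Function.update_of_ne haj]; exact h2 a h
    · intro a ha
      rcases List.mem_cons.mp ha with h | h
      · subst h
        have h0 := H 0 (by simp)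
        simp only [List.take_zero, List.map_nil, List.sum_nil, add_zero] at h0
        have : loads i0 ≤ (∑ i, loads i) / m := by
          rw [le_div_iff₀ hmpos]; linarith [hmin]
        simp only [Function.update_self]
        calc loads i0 + ℓ a ≤ (∑ i, loads i) / m + ℓ a := by linarith
          _ ≤ W a := by simpa using h0
      · have haj : a ≠ j := fun e => hjL (e ▸ h)
        rw [Function.update_of_ne haj]; exact h3 a h
    · intro a ha b hb hab hproc
      rcases List.mem_cons.mp ha with h | h
      · subst h
        rcases List.mem_cons.mp hb with h' | h'
        · exact absurd h'.symm hab
        · have hbj : b ≠ a := fun e => hjL (e ▸ h')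
          simp only [Function.update_self, Function.update_of_ne hbj] at hproc ⊢
          left
          have h5 : loads' (proc b) ≤ off b := h1 b h'
          rw [← hproc] at h5
          simp only [hloads', Function.update_self] at h5
          linarith
      · have haj : a ≠ j := fun e => hjL (e ▸ h)
        rcases List.mem_cons.mp hb with h' | h'
        · subst h'
          simp only [Function.update_self, Function.update_of_ne haj] at hproc ⊢
          right
          have h5 : loads' (proc a) ≤ off a := h1 a h
          rw [hproc] at h5
          simp only [hloads', Function.update_self] at h5
          linarith
        · have hbj : b ≠ j := fun e => hjL (e ▸ h')
          simp only [Function.update_of_ne haj, Function.update_of_ne hbj] at hproc ⊢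
          exact h4 a h b h' hab hproc


lemma vol_sum_le {κ : Type} (s : Finset κ) (B : κ → Set ℝ)
    (hmeas : ∀ k ∈ s, MeasurableSet (B k))
    (hdisj : (↑s : Set κ).PairwiseDisjoint B)
    {a b : ℝ} (hab : a ≤ b) (hsub : ∀ k ∈ s, B k ⊆ Icc a b) :
    ∑ k ∈ s, (volume (B k)).toReal ≤ b - a := by
  have hIcc : volume (Icc a b) ≠ ⊤ := by
    rw [Real.volume_Icc]; exact ENNReal.ofReal_ne_top
  have hfin : ∀ k ∈ s, volume (B k) ≠ ⊤ := fun k hk =>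
    ne_top_of_le_ne_top hIcc (measure_mono (hsub k hk))
  rw [← ENNReal.toReal_sum hfin, ← measure_biUnion_finset hdisj hmeas]
  have h2 : volume (⋃ k ∈ s, B k) ≤ volume (Icc a b) :=
    measure_mono (Set.iUnion₂_subset hsub)
  calc (volume (⋃ k ∈ s, B k)).toReal ≤ (volume (Icc a b)).toReal :=
        ENNReal.toReal_mono hIcc h2
    _ = b - a := by rw [Real.volume_Icc, ENNReal.toReal_ofReal (by linarith)]


lemma arith_key {m : ℕ} (hm : 1 ≤ m) {P t Wv : ℝ} (hP : 0 ≤ P) (ht : 0 ≤ t)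
    (h1 : P + t ≤ m * Wv) (h2 : t ≤ Wv) :
    P / ((2 - 1/(m:ℝ)) * m) + t / (2 - 1/(m:ℝ)) ≤ Wv := by
  have hM : (1:ℝ) ≤ m := by exact_mod_cast hm
  have hM0 : (m:ℝ) ≠ 0 := by linarith
  have hD : (0:ℝ) < 2 * m - 1 := by linarith
  have key : P + m * t ≤ (2 * m - 1) * Wv := by nlinarith
  have heq : P / ((2 - 1/(m:ℝ)) * m) + t / (2 - 1/(m:ℝ)) = (P + m * t) / (2 * m - 1) := by
    have hq : (2 - 1/(m:ℝ)) * m = 2 * m - 1 := by field_simp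
    rw [hq]
    have hq2 : (2 - 1/(m:ℝ)) = (2 * m - 1) / m := by field_simp
    rw [hq2]
    field_simp
  rw [heq, div_le_iff₀ hD]
  linarith


lemma Ioo_disj {a b c d : ℝ} (h : b ≤ c) : Disjoint (Set.Ioo a b) (Set.Ioo c d) := by
  rw [Set.disjoint_left]
  rintro x ⟨_, h1⟩ ⟨h2, _⟩
  linarith

end Helpers

theorem pure_laminar_instances (ι : Type) [Fintype ι] (α : ℝ) (hα : 1 < α)
    (m : ℕ) (hm : 1 ≤ m) (w r d : ι → ℝ)
    (hw : ∀ j, 0 < w j) (hr : ∀ j, 0 ≤ r j) (hrd : ∀ j, r j < d j)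
    (hlaminar : ∀ j j', r j ≤ r j' → d j' ≤ d j)
    (Spr : PreemptiveSchedule ι m w r d) :
    ∃ Snpr : NPSchedule ι m w r d,
      npEnergy α Snpr ≤ (2 * (2 - 1 / (m : ℝ))) ^ (α - 1) * pEnergy α Spr := by
  classical
  rcases isEmpty_or_nonempty ι with hemp | hne
  · exact ⟨⟨isEmptyElim, isEmptyElim, isEmptyElim, isEmptyElim, isEmptyElim, isEmptyElim,
      fun j => isEmptyElim j⟩, by simp [npEnergy, pEnergy]⟩
  -- the common alive time t0
  obtain ⟨j0, -, hj0⟩ := Finset.exists_min_image Finset.univ d Finset.univ_nonempty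
  set t0 := d j0 with ht0def
  have ht0d : ∀ j, t0 ≤ d j := fun j => hj0 j (Finset.mem_univ j)
  have hrt0 : ∀ j, r j ≤ t0 := by
    intro j
    rcases le_total (r j) (r j0) with h | h
    · linarith [hrd j0]
    · have := hlaminar j0 j h; linarith [hrd j]
  -- basic constants
  have hM : (1:ℝ) ≤ m := by exact_mod_cast hm
  have hMpos : (0:ℝ) < m := by linarith
  have hq : (0:ℝ) < 2 - 1/(m:ℝ) := by
    have : 1/(m:ℝ) ≤ 1 := by rw [div_le_one hMpos]; exact hM
    linarith
  set c : ℝ := 2 * (2 - 1/(m:ℝ)) with hcdef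
  have hc : (0:ℝ) < c := by positivity
  -- execution times
  set T : ι → ℝ := fun j => ∑ i, (volume (Spr.A i j)).toReal with hTdef
  set Tm : ι → ℝ := fun j => ∑ i, (volume (Spr.A i j ∩ Iic t0)).toReal with hTmdef
  set Tp : ι → ℝ := fun j => ∑ i, (volume (Spr.A i j ∩ Ioi t0)).toReal with hTpdef
  set ℓ : ι → ℝ := fun j => T j / c with hℓdef
  have hfinIcc : ∀ (a b : ℝ), volume (Icc a b) ≠ ⊤ := by
    intro a b; rw [Real.volume_Icc]; exact ENNReal.ofReal_ne_top
  have hfin : ∀ i j, volume (Spr.A i j) ≠ ⊤ := fun i j =>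
    ne_top_of_le_ne_top (hfinIcc _ _) (measure_mono (Spr.A_subset i j))
  have hT : ∀ j, T j = w j / Spr.speed j := by
    intro j
    rw [eq_div_iff (Spr.speed_pos j).ne', mul_comm]
    exact Spr.work_done j
  have hTpos : ∀ j, 0 < T j := by
    intro j; rw [hT]; exact div_pos (hw j) (Spr.speed_pos j)
  have hTm0 : ∀ j, 0 ≤ Tm j := fun j => Finset.sum_nonneg fun i _ => ENNReal.toReal_nonneg
  have hTp0 : ∀ j, 0 ≤ Tp j := fun j => Finset.sum_nonneg fun i _ => ENNReal.toReal_nonneg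
  have hsplitT : ∀ j, Tm j + Tp j = T j := by
    intro j
    rw [hTmdef, hTpdef, hTdef, ← Finset.sum_add_distrib]
    refine Finset.sum_congr rfl fun i _ => ?_
    have h1 : Spr.A i j ∩ Ioi t0 = Spr.A i j \ Iic t0 := by
      rw [Set.diff_eq, Set.compl_Iic]
    rw [h1, ← ENNReal.toReal_add
      (ne_top_of_le_ne_top (hfin i j) (measure_mono Set.inter_subset_left))
      (ne_top_of_le_ne_top (hfin i j) (measure_mono Set.diff_subset)),
      measure_inter_add_diff _ measurableSet_Iic]
  have hℓpos : ∀ j, 0 < ℓ j := fun j => div_pos (hTpos j) hc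
  -- the left/right windows
  have windowL : ∀ (S : Finset ι) (a : ℝ), a ≤ t0 → (∀ j ∈ S, a ≤ r j) →
      ∑ j ∈ S, Tm j ≤ (m:ℝ) * (t0 - a) := by
    intro S a ha hS
    rw [hTmdef]
    rw [Finset.sum_comm]
    calc ∑ i : Fin m, ∑ j ∈ S, (volume (Spr.A i j ∩ Iic t0)).toReal
        ≤ ∑ _i : Fin m, (t0 - a) := by
          refine Finset.sum_le_sum fun i _ => ?_
          refine vol_sum_le S _ (fun j _ => ((Spr.measurableSet_A i j).inter measurableSet_Iic))
            (fun x _ y _ hxy => Disjoint.mono Set.inter_subset_left Set.inter_subset_left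
              (Spr.disjoint_jobs i x y hxy)) ha ?_
          intro j hj x hx
          exact ⟨le_trans (hS j hj) ((Spr.A_subset i j hx.1).1), hx.2⟩
      _ = (m:ℝ) * (t0 - a) := by simp [Finset.card_univ, mul_comm]; ring
  have windowR : ∀ (S : Finset ι) (b : ℝ), t0 ≤ b → (∀ j ∈ S, d j ≤ b) →
      ∑ j ∈ S, Tp j ≤ (m:ℝ) * (b - t0) := by
    intro S b hb hS
    rw [hTpdef]
    rw [Finset.sum_comm]
    calc ∑ i : Fin m, ∑ j ∈ S, (volume (Spr.A i j ∩ Ioi t0)).toReal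
        ≤ ∑ _i : Fin m, (b - t0) := by
          refine Finset.sum_le_sum fun i _ => ?_
          refine vol_sum_le S _ (fun j _ => ((Spr.measurableSet_A i j).inter measurableSet_Ioi))
            (fun x _ y _ hxy => Disjoint.mono Set.inter_subset_left Set.inter_subset_left
              (Spr.disjoint_jobs i x y hxy)) hb ?_
          intro j hj x hx
          exact ⟨le_of_lt hx.2, le_trans (Spr.A_subset i j hx.1).2 (hS j hj)⟩
      _ = (m:ℝ) * (b - t0) := by simp [Finset.card_univ, mul_comm]; ring
  -- single-job bounds
  have hTmle : ∀ j, Tm j ≤ t0 - r j := by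
    intro j
    rw [hTmdef]
    refine vol_sum_le Finset.univ _ (fun i _ => ((Spr.measurableSet_A i j).inter measurableSet_Iic))
      (fun x _ y _ hxy => Disjoint.mono Set.inter_subset_left Set.inter_subset_left
        (Spr.disjoint_procs j x y hxy)) (hrt0 j) ?_
    intro i _ x hx
    exact ⟨(Spr.A_subset i j hx.1).1, hx.2⟩
  have hTple : ∀ j, Tp j ≤ d j - t0 := by
    intro j
    rw [hTpdef]
    refine vol_sum_le Finset.univ _ (fun i _ => ((Spr.measurableSet_A i j).inter measurableSet_Ioi))
      (fun x _ y _ hxy => Disjoint.mono Set.inter_subset_left Set.inter_subset_left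
        (Spr.disjoint_procs j x y hxy)) (ht0d j) ?_
    intro i _ x hx
    exact ⟨le_of_lt hx.2, (Spr.A_subset i j hx.1).2⟩
  -- left/right job sets and sorted lists
  set Lft : Finset ι := Finset.univ.filter (fun j => Tp j ≤ Tm j) with hLftdef
  set key : ι → ι → Bool := fun a b => decide (r b ≤ r a) with hkeydef
  set LL : List ι := Lft.toList.mergeSort key with hLLdef
  set Rgt : Finset ι := Finset.univ.filter (fun j => ¬ (Tp j ≤ Tm j)) with hRgtdef
  set LR : List ι := Rgt.toList.mergeSort key with hLRdef
  have hkey_trans : ∀ (a b c : ι), key a b = true → key b c = true → key a c = true := by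
    intro a b c hab hbc
    simp only [hkeydef, decide_eq_true_eq] at *
    exact le_trans hbc hab
  have hkey_total : ∀ (a b : ι), (key a b || key b a) = true := by
    intro a b
    simp only [hkeydef, Bool.or_eq_true, decide_eq_true_eq]
    exact le_total (r b) (r a)
  have hsortL : LL.Pairwise (fun a b => r b ≤ r a) := by
    have := List.pairwise_mergeSort hkey_trans hkey_total Lft.toList
    rw [← hLLdef] at this
    exact this.imp (fun h => by simpa [hkeydef] using h)
  have hsortR : LR.Pairwise (fun a b => r b ≤ r a) := by
    have := List.pairwise_mergeSort hkey_trans hkey_total Rgt.toList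
    rw [← hLRdef] at this
    exact this.imp (fun h => by simpa [hkeydef] using h)
  have hpermL : LL.Perm Lft.toList := List.mergeSort_perm _ _
  have hpermR : LR.Perm Rgt.toList := List.mergeSort_perm _ _
  have hndL : LL.Nodup := hpermL.nodup_iff.mpr (Finset.nodup_toList _)
  have hndR : LR.Nodup := hpermR.nodup_iff.mpr (Finset.nodup_toList _)
  have hmemL : ∀ j, j ∈ LL ↔ j ∈ Lft := by
    intro j; rw [hpermL.mem_iff, Finset.mem_toList]
  have hmemR : ∀ j, j ∈ LR ↔ j ∉ Lft := by
    intro j; rw [hpermR.mem_iff, Finset.mem_toList, hRgtdef, hLftdef]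
    simp
  have hLftT : ∀ j ∈ Lft, T j ≤ 2 * Tm j := by
    intro j hj
    rw [hLftdef, Finset.mem_filter] at hj
    linarith [hsplitT j, hj.2]
  have hRgtT : ∀ j, j ∉ Lft → T j ≤ 2 * Tp j := by
    intro j hj
    rw [hLftdef, Finset.mem_filter] at hj
    push_neg at hj
    have := hj (Finset.mem_univ j)
    linarith [hsplitT j]
  -- the ℓ bounds
  have hℓLft : ∀ j ∈ Lft, ℓ j ≤ Tm j / (2 - 1/(m:ℝ)) := by
    intro j hj
    rw [hℓdef]
    have h1 : T j ≤ 2 * Tm j := hLftT j hj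
    rw [hcdef, div_le_div_iff₀ (by positivity) hq]
    nlinarith
  have hℓRgt : ∀ j, j ∉ Lft → ℓ j ≤ Tp j / (2 - 1/(m:ℝ)) := by
    intro j hj
    rw [hℓdef]
    have h1 : T j ≤ 2 * Tp j := hRgtT j hj
    rw [hcdef, div_le_div_iff₀ (by positivity) hq]
    nlinarith
  -- prefix machinery
  have hprefix : ∀ (L : List ι), L.Nodup → L.Pairwise (fun a b => r b ≤ r a) →
      ∀ k (hk : k < L.length),
        (∀ x ∈ L.take k, r (L.get ⟨k, hk⟩) ≤ r x) ∧ (L.get ⟨k, hk⟩) ∉ (L.take k) := by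
    intro L hnd hsort k hk
    have hmemdrop : L.get ⟨k, hk⟩ ∈ L.drop k := by
      rw [List.get_eq_getElem, List.drop_eq_getElem_cons hk]
      exact List.mem_cons_self
    have hsp := List.take_append_drop k L
    constructor
    · intro x hx
      have h2 : List.Pairwise (fun a b => r b ≤ r a) (L.take k ++ L.drop k) := by
        rw [hsp]; exact hsort
      exact (List.pairwise_append.mp h2).2.2 x hx _ hmemdrop
    · intro hmem
      have h2 : (L.take k ++ L.drop k).Nodup := by rw [hsp]; exact hnd
      exact (List.nodup_append.mp h2).2.2 _ hmem _ hmemdrop rfl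
  -- the Graham hypothesis, left side
  have HL : ∀ k (hk : k < LL.length),
      ((∑ _i : Fin m, (0:ℝ)) + ((LL.take k).map ℓ).sum) / m + ℓ (LL.get ⟨k, hk⟩)
        ≤ t0 - r (LL.get ⟨k, hk⟩) := by
    intro k hk
    set jk := LL.get ⟨k, hk⟩ with hjk
    obtain ⟨hpre, hnotmem⟩ := hprefix LL hndL hsortL k hk
    have htake_sub : ∀ x ∈ LL.take k, x ∈ Lft := fun x hx =>
      (hmemL x).mp (List.mem_of_mem_take hx)
    have hndtake : (LL.take k).Nodup := (List.take_sublist k LL).nodup hndL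
    set F := (LL.take k).toFinset with hF
    have hjkF : jk ∉ F := by rw [hF, List.mem_toFinset]; exact hnotmem
    have hjkLft : jk ∈ Lft := (hmemL jk).mp (List.get_mem _ _)
    have hsum_eq : ((LL.take k).map ℓ).sum = ∑ x ∈ F, ℓ x := (List.sum_toFinset ℓ hndtake).symm
    set PT := ∑ x ∈ F, Tm x with hPT
    have hPl : ((LL.take k).map ℓ).sum ≤ PT / (2 - 1/(m:ℝ)) := by
      rw [hsum_eq, hPT, Finset.sum_div]
      exact Finset.sum_le_sum fun x hx => hℓLft x (htake_sub x (List.mem_toFinset.mp hx))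
    have hwin : PT + Tm jk ≤ (m:ℝ) * (t0 - r jk) := by
      have hsub : ∀ x ∈ insert jk F, r jk ≤ r x := by
        intro x hx
        rcases Finset.mem_insert.mp hx with h | h
        · rw [h]
        · exact hpre x (List.mem_toFinset.mp h)
      have := windowL (insert jk F) (r jk) (hrt0 jk) hsub
      rw [Finset.sum_insert hjkF] at this
      linarith
    have hPT0 : (0:ℝ) ≤ PT := Finset.sum_nonneg fun x _ => hTm0 x
    have harith := arith_key hm hPT0 (hTm0 jk) hwin (hTmle jk)
    have hℓjk : ℓ jk ≤ Tm jk / (2 - 1/(m:ℝ)) := hℓLft jk hjkLft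
    have hmono : ((LL.take k).map ℓ).sum / m ≤ PT / ((2 - 1/(m:ℝ)) * m) := by
      rw [show PT / ((2 - 1/(m:ℝ)) * m) = (PT / (2 - 1/(m:ℝ))) / m from (div_div _ _ _).symm]
      gcongr
    simp only [Finset.sum_const, smul_zero, zero_add]
    linarith
  -- the Graham hypothesis, right side
  have HR : ∀ k (hk : k < LR.length),
      ((∑ _i : Fin m, (0:ℝ)) + ((LR.take k).map ℓ).sum) / m + ℓ (LR.get ⟨k, hk⟩)
        ≤ d (LR.get ⟨k, hk⟩) - t0 := by
    intro k hk
    set jk := LR.get ⟨k, hk⟩ with hjk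
    obtain ⟨hpre, hnotmem⟩ := hprefix LR hndR hsortR k hk
    have htake_sub : ∀ x ∈ LR.take k, x ∉ Lft := fun x hx =>
      (hmemR x).mp (List.mem_of_mem_take hx)
    have hndtake : (LR.take k).Nodup := (List.take_sublist k LR).nodup hndR
    set F := (LR.take k).toFinset with hF
    have hjkF : jk ∉ F := by rw [hF, List.mem_toFinset]; exact hnotmem
    have hjkRgt : jk ∉ Lft := (hmemR jk).mp (List.get_mem _ _)
    have hsum_eq : ((LR.take k).map ℓ).sum = ∑ x ∈ F, ℓ x := (List.sum_toFinset ℓ hndtake).symm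
    set PT := ∑ x ∈ F, Tp x with hPT
    have hPl : ((LR.take k).map ℓ).sum ≤ PT / (2 - 1/(m:ℝ)) := by
      rw [hsum_eq, hPT, Finset.sum_div]
      exact Finset.sum_le_sum fun x hx => hℓRgt x (htake_sub x (List.mem_toFinset.mp hx))
    have hwin : PT + Tp jk ≤ (m:ℝ) * (d jk - t0) := by
      have hsub : ∀ x ∈ insert jk F, d x ≤ d jk := by
        intro x hx
        rcases Finset.mem_insert.mp hx with h | h
        · rw [h]
        · exact hlaminar jk x (hpre x (List.mem_toFinset.mp h))
      have := windowR (insert jk F) (d jk) (ht0d jk) hsub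
      rw [Finset.sum_insert hjkF] at this
      linarith
    have hPT0 : (0:ℝ) ≤ PT := Finset.sum_nonneg fun x _ => hTp0 x
    have harith := arith_key hm hPT0 (hTp0 jk) hwin (hTple jk)
    have hℓjk : ℓ jk ≤ Tp jk / (2 - 1/(m:ℝ)) := hℓRgt jk hjkRgt
    have hmono : ((LR.take k).map ℓ).sum / m ≤ PT / ((2 - 1/(m:ℝ)) * m) := by
      rw [show PT / ((2 - 1/(m:ℝ)) * m) = (PT / (2 - 1/(m:ℝ))) / m from (div_div _ _ _).symm]
      gcongr
    simp only [Finset.sum_const, smul_zero, zero_add]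
    linarith
  -- apply the greedy packing on both sides
  obtain ⟨procL, offL, hl1, hl2, hl3, hl4⟩ :=
    graham_pack hm ℓ (fun j => t0 - r j) (fun j => (hℓpos j).le) LL hndL
      (fun _ => 0) (fun _ => le_refl 0) HL
  obtain ⟨procR, offR, hr1, hr2, hr3, hr4⟩ :=
    graham_pack hm ℓ (fun j => d j - t0) (fun j => (hℓpos j).le) LR hndR
      (fun _ => 0) (fun _ => le_refl 0) HR
  have hjLL : ∀ j, j ∈ Lft → j ∈ LL := fun j h => (hmemL j).mpr h
  have hjLR : ∀ j, j ∉ Lft → j ∈ LR := fun j h => (hmemR j).mpr h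
  -- construct the non-preemptive schedule
  refine ⟨⟨fun j => if j ∈ Lft then procL j else procR j,
          fun j => if j ∈ Lft then t0 - offL j - ℓ j else t0 + offR j,
          ℓ, hℓpos, ?_, ?_, ?_⟩, ?_⟩
  · intro j
    split_ifs with h
    · have := hl3 j (hjLL j h); linarith
    · have := hr2 j (hjLR j h); linarith [hrt0 j]
  · intro j
    split_ifs with h
    · have := hl2 j (hjLL j h); linarith [ht0d j]
    · have := hr3 j (hjLR j h); linarith
  · intro j j' hjj' hpp
    by_cases h : j ∈ Lft <;> by_cases h' : j' ∈ Lft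
    · rw [if_pos h, if_pos h'] at hpp ⊢
      rcases hl4 j (hjLL j h) j' (hjLL j' h') hjj' hpp with hcase | hcase
      · exact (Ioo_disj (by linarith)).symm
      · exact Ioo_disj (by linarith)
    · rw [if_pos h, if_neg h'] at hpp ⊢
      exact Ioo_disj (by linarith [hl2 j (hjLL j h), hr2 j' (hjLR j' h')])
    · rw [if_neg h, if_pos h'] at hpp ⊢
      exact (Ioo_disj (by linarith [hl2 j' (hjLL j' h'), hr2 j (hjLR j h)])).symm
    · rw [if_neg h, if_neg h'] at hpp ⊢
      rcases hr4 j (hjLR j h) j' (hjLR j' h') hjj' hpp with hcase | hcase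
      · exact Ioo_disj (by linarith)
      · exact (Ioo_disj (by linarith)).symm
  -- the energy bound
  · have hwl : ∀ j, w j / ℓ j = c * Spr.speed j := by
      intro j
      rw [hℓdef]
      dsimp only
      rw [hT j]
      have hs := (Spr.speed_pos j).ne'
      have hwj := (hw j).ne'
      field_simp
    apply le_of_eq
    simp only [npEnergy, pEnergy]
    rw [Finset.mul_sum]
    refine Finset.sum_congr rfl fun j _ => ?_
    rw [hwl j, Real.mul_rpow hc.le (Spr.speed_pos j).le]
    ring
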